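/- arXiv:1411.0995 — 3 statements merged into one kernel-verified Lean document; each statement's English description precedes it below -/
import Mathlib

section
/- Let a, a′ ∈ ℂ be nonzero. Then there exists a ℂ-linear automorphism of ℂ⁵ mapping the Beloshapka model M(a,0) bijectively onto M(a′,0); in particular all models M(a,0) with a ≠ 0 are biholomorphically equivalent to one another. -/
open ComplexConjugate

noncomputable section

/-- The five-dimensional complex space `ℂ⁵` with coordinates `(z, w₁, w₂, w₃, w₄)`. -/
abbrev C5 : Type := ℂ × ℂ × ℂ × ℂ × ℂ

/-- Beloshapka's model `M(a,b) ⊆ ℂ⁵`. -/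
def BModel (a : ℂ) (b : ℝ) : Set C5 :=
  {p | p.2.1.im = Complex.normSq p.1 ∧
       p.2.2.1.im = 2 * (p.1 ^ 2 * conj p.1).re ∧
       p.2.2.2.1.im = 2 * (p.1 ^ 2 * conj p.1).im ∧
       p.2.2.2.2.im = 2 * (a * p.1 ^ 3 * conj p.1).re + b * Complex.normSq p.1 ^ 2}

/-- Biholomorphic equivalence of two models through local biholomorphisms fixing `0`. -/
def BiholEquiv (a : ℂ) (b : ℝ) (a' : ℂ) (b' : ℝ) : Prop :=
  ∃ (U V : Set C5) (Φ Ψ : C5 → C5),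
    IsOpen U ∧ IsOpen V ∧ (0 : C5) ∈ U ∧ (0 : C5) ∈ V ∧
    DifferentiableOn ℂ Φ U ∧ DifferentiableOn ℂ Ψ V ∧
    Φ 0 = 0 ∧ Set.MapsTo Φ U V ∧ Set.MapsTo Ψ V U ∧
    (∀ p ∈ U, Ψ (Φ p) = p) ∧ (∀ q ∈ V, Φ (Ψ q) = q) ∧
    Φ '' (BModel a b ∩ U) = BModel a' b' ∩ V

/-- Auxiliary linear map: `(z,w₁,w₂,w₃,w₄) ↦ (μz, w₁, Re μ·w₂ − Im μ·w₃,
Im μ·w₂ + Re μ·w₃, c·w₄)`. -/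
def phiMap (μ c : ℂ) : C5 →ₗ[ℂ] C5 where
  toFun p := (μ * p.1, p.2.1,
    (μ.re : ℂ) * p.2.2.1 - (μ.im : ℂ) * p.2.2.2.1,
    (μ.im : ℂ) * p.2.2.1 + (μ.re : ℂ) * p.2.2.2.1,
    c * p.2.2.2.2)
  map_add' p q := by
    simp only [Prod.fst_add, Prod.snd_add, Prod.mk_add_mk]
    refine Prod.ext (by ring) (Prod.ext rfl (Prod.ext (by ring) (Prod.ext (by ring) (by ring))))
  map_smul' t p := by
    simp only [Prod.smul_fst, Prod.smul_snd, Prod.smul_mk, smul_eq_mul, RingHom.id_apply]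
    refine Prod.ext (by ring) (Prod.ext rfl (Prod.ext (by ring) (Prod.ext (by ring) (by ring))))

lemma phiMap_diff (μ c : ℂ) : Differentiable ℂ (phiMap μ c) := by
  unfold phiMap
  simp only [LinearMap.coe_mk, AddHom.coe_mk]
  fun_prop

lemma phiMap_comp (μ c : ℂ) (hμ : μ * conj μ = 1) (hc : c ≠ 0) :
    (phiMap (conj μ) c⁻¹).comp (phiMap μ c) = LinearMap.id := by
  have hn : Complex.normSq μ = 1 := by
    have := Complex.mul_conj μ
    rw [hμ] at this
    exact_mod_cast this.symm
  have hr : (μ.re : ℂ) ^ 2 + (μ.im : ℂ) ^ 2 = 1 := by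
    rw [Complex.normSq_apply] at hn
    exact_mod_cast congrArg (Complex.ofReal)
      (by linear_combination hn : μ.re ^ 2 + μ.im ^ 2 = (1:ℝ))
  apply LinearMap.ext
  rintro ⟨z, w1, w2, w3, w4⟩
  simp only [phiMap, LinearMap.coe_comp, LinearMap.coe_mk, AddHom.coe_mk, Function.comp_apply,
    LinearMap.id_apply, Complex.conj_re, Complex.conj_im, Complex.ofReal_neg]
  refine Prod.ext ?_ (Prod.ext rfl (Prod.ext ?_ (Prod.ext ?_ ?_))) <;> simp only []
  · linear_combination z * hμ
  · linear_combination w2 * hr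
  · linear_combination w3 * hr
  · field_simp

lemma phi_mem (a a' : ℂ) (μ : ℂ) (c : ℝ) (hμ : μ * conj μ = 1) (hc : 0 < c)
    (hμ2 : μ ^ 2 * a' = (c : ℂ) * a) (p : C5) :
    phiMap μ (c : ℂ) p ∈ BModel a' 0 ↔ p ∈ BModel a 0 := by
  have hn : Complex.normSq μ = 1 := by
    have := Complex.mul_conj μ
    rw [hμ] at this
    exact_mod_cast this.symm
  have hr : μ.re ^ 2 + μ.im ^ 2 = 1 := by
    rw [Complex.normSq_apply] at hn
    linear_combination hn
  obtain ⟨z, w1, w2, w3, w4⟩ := p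
  have key2 : (μ * z) ^ 2 * conj (μ * z) = μ * (z ^ 2 * conj z) := by
    rw [map_mul]
    linear_combination (μ * z ^ 2 * conj z) * hμ
  have key3 : a' * (μ * z) ^ 3 * conj (μ * z) = (c : ℂ) * (a * z ^ 3 * conj z) := by
    rw [map_mul]
    linear_combination (z ^ 3 * conj z * a' * μ ^ 2) * hμ + (z ^ 3 * conj z) * hμ2
  have hns : Complex.normSq (μ * z) = Complex.normSq z := by
    rw [Complex.normSq_mul, hn, one_mul]
  simp only [BModel, phiMap, Set.mem_setOf_eq, LinearMap.coe_mk, AddHom.coe_mk, key2, key3, hns]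
  set ζ := z ^ 2 * conj z with hζ
  set Y := a * z ^ 3 * conj z with hY
  simp only [Complex.sub_im, Complex.add_im, Complex.mul_im, Complex.mul_re,
    Complex.ofReal_re, Complex.ofReal_im, zero_mul, mul_zero, sub_zero, add_zero, zero_add]
  constructor
  · rintro ⟨e1, e2, e3, e4⟩
    refine ⟨e1, ?_, ?_, ?_⟩
    · linear_combination μ.re * e2 + μ.im * e3 - (w2.im - 2 * ζ.re) * hr
    · linear_combination -μ.im * e2 + μ.re * e3 - (w3.im - 2 * ζ.im) * hr
    · have h := mul_left_cancel₀ (ne_of_gt hc)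
        (by linarith : c * w4.im = c * (2 * Y.re + 0 * Complex.normSq z ^ 2))
      linarith
  · rintro ⟨e1, e2, e3, e4⟩
    refine ⟨e1, ?_, ?_, ?_⟩
    · linear_combination μ.re * e2 - μ.im * e3
    · linear_combination μ.im * e2 + μ.re * e3
    · linear_combination c * e4

/-- for nonzero `a, a' ∈ ℂ` there is a `ℂ`-linear automorphism of `ℂ⁵`
mapping `M(a,0)` bijectively onto `M(a',0)`; in particular `M(a,0)` and `M(a',0)`
are biholomorphically equivalent. -/
theorem beloshapka_b_zero_models_equivalent (a a' : ℂ) (ha : a ≠ 0) (ha' : a' ≠ 0) :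
    (∃ Φ : C5 ≃ₗ[ℂ] C5, Φ '' BModel a 0 = BModel a' 0) ∧ BiholEquiv a 0 a' 0 := by
  -- the unit complex number μ with μ² a' = (‖a'‖/‖a‖) a
  set w : ℂ := ((‖a'‖ : ℂ) * a) / ((‖a‖ : ℂ) * a') with hw
  have hna : (‖a‖ : ℂ) ≠ 0 := by
    simpa using (norm_ne_zero_iff.mpr ha)
  have hna' : (‖a'‖ : ℂ) ≠ 0 := by
    simpa using (norm_ne_zero_iff.mpr ha')
  have hw0 : w ≠ 0 := div_ne_zero (mul_ne_zero hna' ha) (mul_ne_zero hna ha')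
  have habsw : ‖w‖ = 1 := by
    rw [hw, norm_div, norm_mul, norm_mul, Complex.norm_real, Complex.norm_real,
      norm_norm, norm_norm]
    rw [div_eq_one_iff_eq (mul_ne_zero (norm_ne_zero_iff.mpr ha) (norm_ne_zero_iff.mpr ha'))]
    ring
  set μ : ℂ := Complex.exp (Complex.log w / 2) with hμdef
  have hμsq : μ ^ 2 = w := by
    rw [hμdef, sq, ← Complex.exp_add]
    have h2 : Complex.log w / 2 + Complex.log w / 2 = Complex.log w := by ring
    rw [h2, Complex.exp_log hw0]
  have habsμ : ‖μ‖ = 1 := by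
    rw [hμdef, Complex.norm_exp]
    have : (Complex.log w / 2).re = Real.log ‖w‖ / 2 := by
      simp [Complex.div_re, Complex.log_re]
    rw [this, habsw, Real.log_one]
    norm_num
  have hμ : μ * conj μ = 1 := by
    rw [Complex.mul_conj, ← Complex.sq_norm, habsμ]
    norm_num
  set c : ℝ := ‖a'‖ / ‖a‖ with hcdef
  have hc : 0 < c := div_pos (norm_pos_iff.mpr ha') (norm_pos_iff.mpr ha)
  have hμ2 : μ ^ 2 * a' = (c : ℂ) * a := by
    rw [hμsq, hw, hcdef]
    push_cast
    field_simp
  -- the linear automorphism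
  have hcomp1 := phiMap_comp μ (c : ℂ) hμ (by exact_mod_cast ne_of_gt hc)
  have hμ' : conj μ * conj (conj μ) = 1 := by
    rw [Complex.conj_conj]
    linear_combination hμ
  have hcomp2' := phiMap_comp (conj μ) ((c : ℂ))⁻¹ hμ'
    (inv_ne_zero (by exact_mod_cast ne_of_gt hc))
  have hcomp2 : (phiMap μ (c : ℂ)).comp (phiMap (conj μ) ((c : ℂ))⁻¹) = LinearMap.id := by
    simpa only [Complex.conj_conj, inv_inv] using hcomp2'
  set Φ : C5 ≃ₗ[ℂ] C5 :=
    LinearEquiv.ofLinear (phiMap μ (c : ℂ)) (phiMap (conj μ) ((c : ℂ))⁻¹) hcomp2 hcomp1 with hΦdef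
  have hΦapp : ∀ p : C5, Φ p = phiMap μ (c : ℂ) p := fun p => rfl
  have hΨapp : ∀ p : C5, Φ.symm p = phiMap (conj μ) ((c : ℂ))⁻¹ p := fun p => rfl
  have himg : Φ '' BModel a 0 = BModel a' 0 := by
    ext q
    constructor
    · rintro ⟨p, hp, rfl⟩
      rw [hΦapp]
      exact (phi_mem a a' μ c hμ hc hμ2 p).mpr hp
    · intro hq
      refine ⟨Φ.symm q, ?_, Φ.apply_symm_apply q⟩
      have : phiMap μ (c : ℂ) (Φ.symm q) = q := by
        rw [← hΦapp, Φ.apply_symm_apply]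
      exact (phi_mem a a' μ c hμ hc hμ2 (Φ.symm q)).mp (by rwa [this])
  refine ⟨⟨Φ, himg⟩, ?_⟩
  refine ⟨Set.univ, Set.univ, Φ, Φ.symm, isOpen_univ, isOpen_univ, trivial, trivial,
    ?_, ?_, map_zero Φ, Set.mapsTo_univ _ _, Set.mapsTo_univ _ _,
    fun p _ => Φ.symm_apply_apply p, fun q _ => Φ.apply_symm_apply q, ?_⟩
  · exact ((phiMap_diff μ (c : ℂ)).differentiableOn).congr (fun p _ => hΦapp p)
  · exact ((phiMap_diff (conj μ) ((c : ℂ))⁻¹).differentiableOn).congr (fun p _ => hΨapp p)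
  · rw [Set.inter_univ, Set.inter_univ, himg]
end
end

section
/- Let r > 0, θ ∈ ℝ, and b ∈ ℝ. The ℂ-linear automorphism Φ of ℂ⁵ defined by Φ(z, w₁, w₂, w₃, w₄) = (e^{−iθ/2}·z, w₁, cos(θ/2)·w₂ + sin(θ/2)·w₃, −sin(θ/2)·w₂ + cos(θ/2)·w₃, w₄) maps the Beloshapka model M(r, b) bijectively onto M(r·e^{iθ}, b). In particular, for every nonzero a ∈ ℂ and every b ∈ ℝ, the model M(a,b) is the image of M(|a|, b) under a ℂ-linear automorphism of ℂ⁵, so M(a,b) is biholomorphically equivalent to M(|a|, b). -/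
open ComplexConjugate

noncomputable section

/-- The explicit linear map
`Φ(z,w₁,w₂,w₃,w₄) = (e^{-iθ/2} z, w₁, cos(θ/2) w₂ + sin(θ/2) w₃,
-sin(θ/2) w₂ + cos(θ/2) w₃, w₄)`. -/
def rotMap (θ : ℝ) : C5 → C5 := fun p =>
  (Complex.exp (-(θ / 2 : ℝ) * Complex.I) * p.1,
   p.2.1,
   (Real.cos (θ / 2) : ℂ) * p.2.2.1 + (Real.sin (θ / 2) : ℂ) * p.2.2.2.1,
   -(Real.sin (θ / 2) : ℂ) * p.2.2.1 + (Real.cos (θ / 2) : ℂ) * p.2.2.2.1,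
   p.2.2.2.2)

lemma rot_key (a : ℂ) (b : ℝ) (θ : ℝ) (p : C5) (hp : p ∈ BModel a b) :
    rotMap θ p ∈ BModel (a * Complex.exp ((θ : ℂ) * Complex.I)) b := by
  obtain ⟨z, w1, w2, w3, w4⟩ := p
  obtain ⟨h1, h2, h3, h4⟩ := hp
  set e : ℂ := Complex.exp (-(θ / 2 : ℝ) * Complex.I) with he
  have hne : Complex.normSq e = 1 := by
    rw [Complex.normSq_eq_norm_sq, he]
    rw [show (-(θ / 2 : ℝ) * Complex.I : ℂ) = ((-(θ/2) : ℝ) : ℂ) * Complex.I by push_cast; ring]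
    rw [Complex.norm_exp_ofReal_mul_I]; norm_num
  have hce : conj e = Complex.exp ((θ / 2 : ℝ) * Complex.I) := by
    rw [he, ← Complex.exp_conj, map_mul, Complex.conj_I, map_neg, Complex.conj_ofReal]
    ring_nf
  have h2e : e ^ 2 * conj e = e := by
    rw [pow_two, hce, he, ← Complex.exp_add, ← Complex.exp_add]
    congr 1; ring
  have h4e : Complex.exp ((θ : ℂ) * Complex.I) * (e ^ 3 * conj e) = 1 := by
    rw [pow_succ, pow_two, hce, he, ← Complex.exp_add, ← Complex.exp_add, ← Complex.exp_add,
      ← Complex.exp_add]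
    rw [show ((θ : ℂ) * Complex.I + (-(θ / 2 : ℝ) * Complex.I + -(θ / 2 : ℝ) * Complex.I +
      -(θ / 2 : ℝ) * Complex.I + (θ / 2 : ℝ) * Complex.I)) = 0 by push_cast; ring]
    exact Complex.exp_zero
  have hA : (e * z) ^ 2 * conj (e * z) = e * (z ^ 2 * conj z) := by
    rw [map_mul]; linear_combination (z ^ 2 * conj z) * h2e
  have hB : (a * Complex.exp ((θ : ℂ) * Complex.I)) * (e * z) ^ 3 * conj (e * z)
      = a * z ^ 3 * conj z := by
    rw [map_mul]; linear_combination (a * z ^ 3 * conj z) * h4e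
  have her : e.re = Real.cos (θ / 2) := by
    rw [he]; simp [Complex.exp_re]
  have hei : e.im = -Real.sin (θ / 2) := by
    rw [he]; simp [Complex.exp_im]
  dsimp only at h1 h2 h3 h4
  set A : ℂ := z ^ 2 * conj z with hA2
  refine ⟨?_, ?_, ?_, ?_⟩ <;> simp only [rotMap, ← he]
  · rw [Complex.normSq_mul, hne, one_mul]; exact h1
  · rw [hA, Complex.mul_re, her, hei]
    simp only [Complex.add_im, Complex.mul_im, Complex.ofReal_re, Complex.ofReal_im,
      Complex.neg_im, Complex.neg_re, neg_mul]
    rw [h2, h3]; ring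
  · rw [hA, Complex.mul_im, her, hei]
    simp only [Complex.add_im, Complex.mul_im, Complex.ofReal_re, Complex.ofReal_im,
      Complex.neg_im, Complex.neg_re, neg_mul]
    rw [h2, h3]; ring
  · rw [show (a * Complex.exp ((θ : ℂ) * Complex.I)) * (e * z) ^ 3 * conj (e * z)
        = a * z ^ 3 * conj z from hB, Complex.normSq_mul, hne, one_mul]
    exact h4

lemma rot_rot (θ : ℝ) (p : C5) : rotMap (-θ) (rotMap θ p) = p := by
  obtain ⟨z, w1, w2, w3, w4⟩ := p
  have h : ((Real.sin (θ / 2) : ℂ)) ^ 2 + ((Real.cos (θ / 2) : ℂ)) ^ 2 = 1 := by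
    norm_cast; exact Real.sin_sq_add_cos_sq _
  simp only [rotMap, neg_div, Real.cos_neg, Real.sin_neg]
  refine Prod.ext ?_ (Prod.ext rfl (Prod.ext ?_ (Prod.ext ?_ rfl)))
  · rw [← mul_assoc, ← Complex.exp_add]
    rw [show (-(-(θ / 2) : ℝ) * Complex.I + -(θ / 2 : ℝ) * Complex.I : ℂ) = 0 by push_cast; ring]
    rw [Complex.exp_zero, one_mul]
  · simp only [Complex.ofReal_neg]
    linear_combination w2 * h
  · simp only [Complex.ofReal_neg]
    linear_combination w3 * h

lemma rot_rot' (θ : ℝ) (q : C5) : rotMap θ (rotMap (-θ) q) = q := by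
  have := rot_rot (-θ) q
  rwa [neg_neg] at this

lemma rot_lin (θ : ℝ) : IsLinearMap ℂ (rotMap θ) := by
  constructor
  · intro x y
    simp only [rotMap, Prod.fst_add, Prod.snd_add, Prod.mk_add_mk]
    refine Prod.ext ?_ (Prod.ext rfl (Prod.ext ?_ (Prod.ext ?_ rfl))) <;> dsimp <;> ring
  · intro c x
    simp only [rotMap, Prod.smul_fst, Prod.smul_snd, Prod.smul_mk, smul_eq_mul]
    refine Prod.ext ?_ (Prod.ext rfl (Prod.ext ?_ (Prod.ext ?_ rfl))) <;> dsimp <;> ring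

lemma rot_bij (θ : ℝ) : Function.Bijective (rotMap θ) :=
  Function.bijective_iff_has_inverse.mpr ⟨rotMap (-θ), rot_rot θ, rot_rot' θ⟩

lemma rot_image (a : ℂ) (b : ℝ) (θ : ℝ) :
    rotMap θ '' BModel a b = BModel (a * Complex.exp ((θ : ℂ) * Complex.I)) b := by
  ext q
  constructor
  · rintro ⟨p, hp, rfl⟩
    exact rot_key a b θ p hp
  · intro hq
    refine ⟨rotMap (-θ) q, ?_, rot_rot' θ q⟩
    have h := rot_key _ b (-θ) q hq
    rwa [mul_assoc, ← Complex.exp_add,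
      show ((θ : ℂ) * Complex.I + ((-θ : ℝ) : ℂ) * Complex.I) = 0 by push_cast; ring,
      Complex.exp_zero, mul_one] at h

lemma rot_diff (θ : ℝ) : Differentiable ℂ (rotMap θ) := by
  unfold rotMap
  fun_prop


/-- the `ℂ`-linear automorphism `rotMap θ` maps `M(r,b)` bijectively onto
`M(r·e^{iθ}, b)`; in particular every `M(a,b)` with `a ≠ 0` is the image of `M(|a|,b)`
under a `ℂ`-linear automorphism of `ℂ⁵`, hence biholomorphically equivalent to it. -/
theorem beloshapka_rotation_to_modulus (r : ℝ) (hr : 0 < r) (θ : ℝ) (b : ℝ) :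
    (IsLinearMap ℂ (rotMap θ) ∧ Function.Bijective (rotMap θ) ∧
      rotMap θ '' BModel (r : ℂ) b = BModel ((r : ℂ) * Complex.exp ((θ : ℂ) * Complex.I)) b) ∧
    (∀ a : ℂ, a ≠ 0 → ∀ b' : ℝ,
      (∃ Φ : C5 ≃ₗ[ℂ] C5, Φ '' BModel ((‖a‖ : ℝ) : ℂ) b' = BModel a b') ∧
      BiholEquiv ((‖a‖ : ℝ) : ℂ) b' a b') := by
  refine ⟨⟨rot_lin θ, rot_bij θ, rot_image _ b θ⟩, ?_⟩
  intro a ha b'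
  set φ := a.arg with hφ
  have hima : rotMap φ '' BModel ((‖a‖ : ℝ) : ℂ) b' = BModel a b' := by
    rw [rot_image, Complex.norm_mul_exp_arg_mul_I]
  constructor
  · refine ⟨LinearEquiv.ofBijective (IsLinearMap.mk' _ (rot_lin φ)) (rot_bij φ), ?_⟩
    exact hima
  · refine ⟨Set.univ, Set.univ, rotMap φ, rotMap (-φ), isOpen_univ, isOpen_univ,
      trivial, trivial, (rot_diff φ).differentiableOn, (rot_diff (-φ)).differentiableOn,
      ?_, Set.mapsTo_univ _ _, Set.mapsTo_univ _ _,
      fun p _ => rot_rot φ p, fun q _ => rot_rot' φ q, ?_⟩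
    · simp [rotMap]
    · rw [Set.inter_univ, Set.inter_univ]; exact hima
end
end

section
/- Let a, a′ ∈ ℂ be nonzero and let b, b′ ∈ ℝ be nonzero, and suppose a·conj(a)/b² = a′·conj(a′)/b′². Then there exists a ℂ-linear automorphism of ℂ⁵ mapping the Beloshapka model M(a,b) bijectively onto M(a′,b′). -/
open ComplexConjugate

noncomputable section

/-- auxiliary linear scaling/rotation map -/
def phiFun (l : ℂ) (t : ℝ) (p : C5) : C5 :=
  (l * p.1, p.2.1,
   (l.re : ℂ) * p.2.2.1 - (l.im : ℂ) * p.2.2.2.1,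
   (l.im : ℂ) * p.2.2.1 + (l.re : ℂ) * p.2.2.2.1,
   ((t : ℝ) : ℂ) * p.2.2.2.2)

lemma phiFun_inv (l : ℂ) (t : ℝ) (hl : Complex.normSq l = 1) (ht : t ≠ 0)
    (p : C5) : phiFun (conj l) t⁻¹ (phiFun l t p) = p := by
  obtain ⟨z, w1, w2, w3, w4⟩ := p
  have hlc : conj l * l = 1 := by
    rw [mul_comm, Complex.mul_conj, hl]; norm_num
  have hri : (l.re : ℂ) ^ 2 + (l.im : ℂ) ^ 2 = 1 := by
    have : l.re ^ 2 + l.im ^ 2 = 1 := by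
      simpa [Complex.normSq_apply, sq] using hl
    exact_mod_cast this
  have htC : ((t⁻¹ : ℝ) : ℂ) * ((t : ℝ) : ℂ) = 1 := by
    have htC0 : (t : ℂ) ≠ 0 := by exact_mod_cast ht
    push_cast
    field_simp
  simp only [phiFun, Complex.conj_re, Complex.conj_im, Prod.mk.injEq]
  refine ⟨?_, trivial, ?_, ?_, ?_⟩
  · linear_combination z * hlc
  · push_cast; linear_combination w2 * hri
  · push_cast; linear_combination w3 * hri
  · linear_combination w4 * htC


/-- if `a, a'` are nonzero complex numbers and `b, b'` nonzero reals with
`a·conj a / b² = a'·conj a' / b'²`, then some `ℂ`-linear automorphism of `ℂ⁵` maps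
`M(a,b)` bijectively onto `M(a',b')`. -/
theorem beloshapka_linear_equivalence_of_equal_invariants (a a' : ℂ) (b b' : ℝ)
    (ha : a ≠ 0) (ha' : a' ≠ 0) (hb : b ≠ 0) (hb' : b' ≠ 0)
    (h : a * conj a / (b : ℂ) ^ 2 = a' * conj a' / (b' : ℂ) ^ 2) :
    ∃ Φ : C5 ≃ₗ[ℂ] C5, Φ '' BModel a b = BModel a' b' := by
  have hbC : (b : ℂ) ≠ 0 := by exact_mod_cast hb
  have hb'C : (b' : ℂ) ≠ 0 := by exact_mod_cast hb'
  set u : ℂ := (b' : ℂ) / (b : ℂ) * (a / a') with hu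
  -- real invariant relation
  have hr : Complex.normSq a * b' ^ 2 = Complex.normSq a' * b ^ 2 := by
    rw [Complex.mul_conj, Complex.mul_conj] at h
    field_simp at h
    rw [mul_comm (Complex.normSq a')]
    exact_mod_cast h
  have hua : Complex.normSq a ≠ 0 := (Complex.normSq_pos.2 ha).ne'
  have hua' : Complex.normSq a' ≠ 0 := (Complex.normSq_pos.2 ha').ne'
  have hnu : Complex.normSq u = 1 := by
    rw [hu, Complex.normSq_mul, Complex.normSq_div, Complex.normSq_div,
      Complex.normSq_ofReal, Complex.normSq_ofReal]
    field_simp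
    nlinarith [hr]
  obtain ⟨l, hl⟩ : ∃ l : ℂ, l ^ 2 = u := by
    rcases IsAlgClosed.exists_pow_nat_eq u (n := 2) (by norm_num) with ⟨l, hl⟩
    exact ⟨l, hl⟩
  have hnl : Complex.normSq l = 1 := by
    have h2 : Complex.normSq l ^ 2 = 1 := by
      rw [← map_pow, hl, hnu]
    nlinarith [Complex.normSq_nonneg l]
  set t : ℝ := b' / b with htdef
  have ht : t ≠ 0 := div_ne_zero hb' hb
  have htb : t * b = b' := div_mul_cancel₀ _ hb
  have hlc : l * conj l = 1 := by rw [Complex.mul_conj, hnl]; norm_num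
  have hln : l ≠ 0 := by
    intro h0; rw [h0] at hlc; simp at hlc
  have hri : l.re ^ 2 + l.im ^ 2 = 1 := by
    simpa [Complex.normSq_apply, sq] using hnl
  -- a' * l^2 = t * a
  have hkey : a' * l ^ 2 = ((t : ℝ) : ℂ) * a := by
    rw [hl, hu]; push_cast [htdef]; field_simp
  let Φ : C5 ≃ₗ[ℂ] C5 :=
  { toFun := phiFun l t
    invFun := phiFun (conj l) t⁻¹
    map_add' := by
      rintro ⟨z, w1, w2, w3, w4⟩ ⟨z', w1', w2', w3', w4'⟩
      simp only [phiFun, Prod.mk_add_mk, Prod.mk.injEq]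
      refine ⟨by ring, trivial, by ring, by ring, by ring⟩
    map_smul' := by
      rintro c ⟨z, w1, w2, w3, w4⟩
      simp only [phiFun, Prod.smul_mk, smul_eq_mul, RingHom.id_apply, Prod.mk.injEq]
      refine ⟨by ring, trivial, by ring, by ring, by ring⟩
    left_inv := phiFun_inv l t hnl ht
    right_inv := by
      intro q
      have := phiFun_inv (conj l) t⁻¹ (by simpa using hnl) (inv_ne_zero ht) q
      simpa [inv_inv] using this }
  have mem_iff : ∀ p : C5, p ∈ BModel a b ↔ Φ p ∈ BModel a' b' := by
    rintro ⟨z, w1, w2, w3, w4⟩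
    have hz3 : (l * z) ^ 2 * conj (l * z) = l * (z ^ 2 * conj z) := by
      rw [map_mul]
      linear_combination z ^ 2 * conj z * l * hlc
    have hz4 : a' * (l * z) ^ 3 * conj (l * z) = ((t : ℝ) : ℂ) * (a * z ^ 3 * conj z) := by
      rw [map_mul]
      linear_combination (a' * l ^ 2 * z ^ 3 * conj z) * hlc + (z ^ 3 * conj z) * hkey
    show _ ↔ (phiFun l t (z, w1, w2, w3, w4) ∈ BModel a' b')
    simp only [BModel, phiFun, Set.mem_setOf_eq, hz3, hz4]
    rw [Complex.normSq_mul, hnl, one_mul]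
    set ζ := z ^ 2 * conj z with hζ
    set ξ := a * z ^ 3 * conj z with hξ
    simp only [Complex.sub_im, Complex.add_im, Complex.mul_im, Complex.ofReal_re,
      Complex.ofReal_im, Complex.mul_re, zero_mul, sub_zero, add_zero, zero_add]
    constructor
    · rintro ⟨h1, h2, h3, h4⟩
      refine ⟨h1, by linear_combination l.re * h2 - l.im * h3,
        by linear_combination l.im * h2 + l.re * h3, ?_⟩
      linear_combination t * h4 + Complex.normSq z ^ 2 * htb
    · rintro ⟨h1, h2, h3, h4⟩
      refine ⟨h1, ?_, ?_, ?_⟩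
      · linear_combination l.re * h2 + l.im * h3 + (2 * ζ.re - w2.im) * hri
      · linear_combination -l.im * h2 + l.re * h3 + (2 * ζ.im - w3.im) * hri
      · have hmain : t * w4.im = t * (2 * ξ.re + b * Complex.normSq z ^ 2) := by
          linear_combination h4 - Complex.normSq z ^ 2 * htb
        exact mul_left_cancel₀ ht hmain
  refine ⟨Φ, ?_⟩
  ext q
  constructor
  · rintro ⟨p, hp, rfl⟩
    exact (mem_iff p).1 hp
  · intro hq
    exact ⟨Φ.symm q, (mem_iff _).2 (by simpa using hq), by simp⟩
end
end
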